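/- Suppose L : [0,T) → (0,∞) is C² and satisfies −L³L'' = β₀ − (c₁α²)/(2ML²) + (c₂α⁴)/(2ML⁴) − (c₃α⁶)/(2ML⁶) for positive constants β₀, c₁, c₂, c₃, α, M. Then E(t) = (L')² − β₀/L² + (c₁α²)/(4ML⁴) − (c₂α⁴)/(6ML⁶) + (c₃α⁶)/(8ML⁸) is constant, and consequently L(t) ≥ δ for some δ > 0 independent of t (L cannot reach zero). -/

import Mathlib

open Set

/-- Third-order reduced modulation ODE: if `L : [0,T) → (0,∞)` is `C²`, bounded above, and
satisfies `−L³L'' = β₀ − c₁α²/(2ML²) + c₂α⁴/(2ML⁴) − c₃α⁶/(2ML⁶)` with positive constants,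
then `E(t) = (L')² − β₀/L² + c₁α²/(4ML⁴) − c₂α⁴/(6ML⁶) + c₃α⁶/(8ML⁸)` is constant, and
consequently `L` is bounded below by a positive constant (it cannot reach zero). -/
theorem stmt19 (T β₀ c₁ c₂ c₃ α M : ℝ) (hT : 0 < T)
    (hβ : 0 < β₀) (hc₁ : 0 < c₁) (hc₂ : 0 < c₂) (hc₃ : 0 < c₃) (hα : 0 < α) (hM : 0 < M)
    (L L' L'' : ℝ → ℝ)
    (hL : ∀ t ∈ Ico 0 T, 0 < L t)
    (hbdd : ∃ Y : ℝ, ∀ t ∈ Ico 0 T, L t ≤ Y)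
    (hd1 : ∀ t ∈ Ico 0 T, HasDerivWithinAt L (L' t) (Ico 0 T) t)
    (hd2 : ∀ t ∈ Ico 0 T, HasDerivWithinAt L' (L'' t) (Ico 0 T) t)
    (hcont : ContinuousOn L'' (Ico 0 T))
    (heq : ∀ t ∈ Ico 0 T, -((L t) ^ 3 * L'' t)
      = β₀ - c₁ * α ^ 2 / (2 * M * (L t) ^ 2) + c₂ * α ^ 4 / (2 * M * (L t) ^ 4)
        - c₃ * α ^ 6 / (2 * M * (L t) ^ 6)) :
    (∀ t ∈ Ico 0 T,
      (L' t) ^ 2 - β₀ / (L t) ^ 2 + c₁ * α ^ 2 / (4 * M * (L t) ^ 4)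
          - c₂ * α ^ 4 / (6 * M * (L t) ^ 6) + c₃ * α ^ 6 / (8 * M * (L t) ^ 8)
        = (L' 0) ^ 2 - β₀ / (L 0) ^ 2 + c₁ * α ^ 2 / (4 * M * (L 0) ^ 4)
          - c₂ * α ^ 4 / (6 * M * (L 0) ^ 6) + c₃ * α ^ 6 / (8 * M * (L 0) ^ 8)) ∧
    ∃ δ > 0, ∀ t ∈ Ico 0 T, δ ≤ L t := by
  set s := Ico (0:ℝ) T with hsdef
  have h0 : (0:ℝ) ∈ s := ⟨le_refl 0, hT⟩
  set E : ℝ → ℝ := fun t => (L' t) ^ 2 - β₀ / (L t) ^ 2 + c₁ * α ^ 2 / (4 * M * (L t) ^ 4)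
      - c₂ * α ^ 4 / (6 * M * (L t) ^ 6) + c₃ * α ^ 6 / (8 * M * (L t) ^ 8) with hEdef
  have hMne : M ≠ 0 := ne_of_gt hM
  have key : ∀ u ∈ s, HasDerivWithinAt E 0 s u := by
    intro u hu
    have hLu := hL u hu
    have hLne : L u ≠ 0 := ne_of_gt hLu
    have hne2 : (L u) ^ 2 ≠ 0 := pow_ne_zero _ hLne
    have hne4 : 4 * M * (L u) ^ 4 ≠ 0 := by positivity
    have hne6 : 6 * M * (L u) ^ 6 ≠ 0 := by positivity
    have hne8 : 8 * M * (L u) ^ 8 ≠ 0 := by positivity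
    have hE' := (((((hd2 u hu).pow 2).sub
        ((hasDerivWithinAt_const u s β₀).div ((hd1 u hu).pow 2) hne2)).add
        ((hasDerivWithinAt_const u s (c₁ * α ^ 2)).div
          (((hd1 u hu).pow 4).const_mul (4 * M)) hne4)).sub
        ((hasDerivWithinAt_const u s (c₂ * α ^ 4)).div
          (((hd1 u hu).pow 6).const_mul (6 * M)) hne6)).add
        ((hasDerivWithinAt_const u s (c₃ * α ^ 6)).div
          (((hd1 u hu).pow 8).const_mul (8 * M)) hne8)
    have he := heq u hu
    have hL'' : L'' u = -(β₀ - c₁ * α ^ 2 / (2 * M * (L u) ^ 2)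
        + c₂ * α ^ 4 / (2 * M * (L u) ^ 4) - c₃ * α ^ 6 / (2 * M * (L u) ^ 6)) / (L u) ^ 3 := by
      rw [← he]; field_simp
    have hzero : (2 : ℕ) * L' u ^ (2 - 1) * L'' u -
        (0 * L u ^ 2 - β₀ * ((2 : ℕ) * L u ^ (2 - 1) * L' u)) / (L u ^ 2) ^ 2 +
        (0 * (4 * M * L u ^ 4) - c₁ * α ^ 2 * (4 * M * ((4 : ℕ) * L u ^ (4 - 1) * L' u))) /
          (4 * M * L u ^ 4) ^ 2 -
        (0 * (6 * M * L u ^ 6) - c₂ * α ^ 4 * (6 * M * ((6 : ℕ) * L u ^ (6 - 1) * L' u))) /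
          (6 * M * L u ^ 6) ^ 2 +
        (0 * (8 * M * L u ^ 8) - c₃ * α ^ 6 * (8 * M * ((8 : ℕ) * L u ^ (8 - 1) * L' u))) /
          (8 * M * L u ^ 8) ^ 2 = 0 := by
      rw [hL'']
      field_simp
      ring
    simp only [Pi.pow_apply] at hE'
    rw [hzero] at hE'
    exact hE'
  have hconst : ∀ t ∈ s, E t = E 0 := by
    intro t ht
    have hb : ∀ u ∈ s, ‖(0 : ℝ)‖ ≤ (0 : ℝ) := fun u _ => by simp
    have := (convex_Ico (0:ℝ) T).norm_image_sub_le_of_norm_hasDerivWithin_le key hb h0 ht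
    rw [zero_mul] at this
    have h' : E t - E 0 = 0 := by
      have := norm_le_zero_iff.mp this
      exact this
    linarith
  refine ⟨hconst, ?_⟩
  set E₀ : ℝ := E 0 with hE₀
  set Bc : ℝ := c₂ * α ^ 4 / (6 * M) with hBc
  set Cc : ℝ := c₃ * α ^ 6 / (8 * M) with hCcdef
  set K : ℝ := |E₀| + β₀ + Bc + 1 with hK
  have hCc0 : 0 < Cc := by positivity
  have hBc0 : 0 < Bc := by positivity
  have hK0 : 0 < K := by positivity
  refine ⟨min 1 (Real.sqrt (Cc / K)), lt_min one_pos (Real.sqrt_pos.mpr (by positivity)), ?_⟩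
  intro t ht
  have hx : 0 < L t := hL t ht
  rcases le_or_gt 1 (L t) with h1 | h1
  · exact le_trans (min_le_left _ _) h1
  · refine le_trans (min_le_right _ _) ?_
    have hEt : E t = E₀ := hconst t ht
    have hApos : 0 ≤ c₁ * α ^ 2 / (4 * M * (L t) ^ 4) := by positivity
    have hsq' : 0 ≤ (L' t) ^ 2 := sq_nonneg _
    have hre : c₃ * α ^ 6 / (8 * M * (L t) ^ 8) ≤ E₀ + β₀ / (L t) ^ 2
        + c₂ * α ^ 4 / (6 * M * (L t) ^ 6) := by
      have h := hEt
      simp only [hEdef] at h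
      linarith
    have hx8 : (0:ℝ) < (L t) ^ 8 := by positivity
    have h8 : Cc ≤ E₀ * (L t) ^ 8 + β₀ * (L t) ^ 6 + Bc * (L t) ^ 2 := by
      have h := mul_le_mul_of_nonneg_right hre hx8.le
      have e1 : c₃ * α ^ 6 / (8 * M * (L t) ^ 8) * (L t) ^ 8 = Cc := by
        rw [hCcdef]; field_simp
      have e2 : (E₀ + β₀ / (L t) ^ 2 + c₂ * α ^ 4 / (6 * M * (L t) ^ 6)) * (L t) ^ 8
          = E₀ * (L t) ^ 8 + β₀ * (L t) ^ 6 + Bc * (L t) ^ 2 := by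
        rw [hBc]; field_simp
      rw [e1, e2] at h
      exact h
    have hx82 : (L t) ^ 8 ≤ (L t) ^ 2 := pow_le_pow_of_le_one hx.le h1.le (by norm_num)
    have hx62 : (L t) ^ 6 ≤ (L t) ^ 2 := pow_le_pow_of_le_one hx.le h1.le (by norm_num)
    have hEabs : E₀ * (L t) ^ 8 ≤ |E₀| * (L t) ^ 2 :=
      le_trans (mul_le_mul_of_nonneg_right (le_abs_self E₀) hx8.le)
        (mul_le_mul_of_nonneg_left hx82 (abs_nonneg E₀))
    have hβ6 : β₀ * (L t) ^ 6 ≤ β₀ * (L t) ^ 2 := mul_le_mul_of_nonneg_left hx62 hβ.le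
    have hKx : Cc ≤ (L t) ^ 2 * K := by
      have hx2 : (0:ℝ) ≤ (L t) ^ 2 := sq_nonneg _
      rw [hK]
      nlinarith
    have hdiv : Cc / K ≤ (L t) ^ 2 := (div_le_iff₀ hK0).mpr hKx
    calc Real.sqrt (Cc / K) ≤ Real.sqrt ((L t) ^ 2) := Real.sqrt_le_sqrt hdiv
      _ = L t := Real.sqrt_sq hx.le
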